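/- Let $M \geq 2$, $h > 0$, and consider mesh functions $u = (u_0,\ldots,u_M)$ with $u_0 = u_M = 0$. Define the averaging operator $(\mathscr{A}u)_i = \frac{1}{12}(u_{i-1} + 10 u_i + u_{i+1})$ for $1 \leq i \leq M-1$, the inner products $(u,v) = h\sum_{i=1}^{M-1} u_i v_i$ and $(\delta_x u, \delta_x v) = \frac{1}{h}\sum_{i=1}^{M}(u_i - u_{i-1})(v_i - v_{i-1})$, with induced norms $\|u\|$ and $\|\delta_x u\|$, and $\|\delta_x u\|_{\mathcal{A}}^2 = (\mathscr{A}u, -\delta_x^2 u)$ where $(\delta_x^2 u)_i = (u_{i-1} - 2u_i + u_{i+1})/h^2$. Then $\frac{2}{3}\|\delta_x u\|^2 \leq \|\delta_x u\|_{\mathcal{A}}^2 \leq \|\delta_x u\|^2$ and $\frac{1}{3}\|u\|^2 \leq \|\mathscr{A}u\|^2 \leq \|u\|^2$. -/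

import Mathlib

open Finset

private lemma sbp' (u : ℕ → ℝ) : ∀ N : ℕ,
    ∑ i ∈ Icc 1 N, u i * (u (i-1) - 2*u i + u (i+1)) +
      ∑ i ∈ Icc 1 (N+1), (u i - u (i-1))^2 =
    u (N+1) * (u (N+1) - u N) - u 0 * (u 1 - u 0) := by
  intro N
  induction N with
  | zero => simp; ring
  | succ n ih =>
    rw [Finset.sum_Icc_succ_top (by omega : 1 ≤ n+1),
        Finset.sum_Icc_succ_top (by omega : (1:ℕ) ≤ n+1+1)]
    simp only [Nat.add_sub_cancel] at *
    linear_combination ih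

theorem stmt_13 (M : ℕ) (hM : 2 ≤ M) (h : ℝ) (hh : 0 < h)
    (u : ℕ → ℝ) (hu0 : u 0 = 0) (huM : u M = 0) :
    (2/3) * ((1/h) * ∑ i ∈ Finset.Icc 1 M, (u i - u (i-1))^2) ≤
      h * ∑ i ∈ Finset.Icc 1 (M-1),
        ((u (i-1) + 10 * u i + u (i+1)) / 12) *
          (-((u (i-1) - 2 * u i + u (i+1)) / h^2)) ∧
    h * ∑ i ∈ Finset.Icc 1 (M-1),
        ((u (i-1) + 10 * u i + u (i+1)) / 12) *
          (-((u (i-1) - 2 * u i + u (i+1)) / h^2)) ≤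
      (1/h) * ∑ i ∈ Finset.Icc 1 M, (u i - u (i-1))^2 ∧
    (1/3) * (h * ∑ i ∈ Finset.Icc 1 (M-1), (u i)^2) ≤
      h * ∑ i ∈ Finset.Icc 1 (M-1), ((u (i-1) + 10 * u i + u (i+1)) / 12)^2 ∧
    h * ∑ i ∈ Finset.Icc 1 (M-1), ((u (i-1) + 10 * u i + u (i+1)) / 12)^2 ≤
      h * ∑ i ∈ Finset.Icc 1 (M-1), (u i)^2 := by
  obtain ⟨N, rfl⟩ : ∃ N, M = N + 1 := ⟨M - 1, by omega⟩
  simp only [Nat.add_sub_cancel]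
  have hne : h ≠ 0 := ne_of_gt hh
  set S0 : ℝ := ∑ i ∈ Icc 1 N, (u i)^2 with hS0
  set S1 : ℝ := ∑ i ∈ Icc 1 (N+1), (u i - u (i-1))^2 with hS1
  set S2 : ℝ := ∑ i ∈ Icc 1 N, (u (i-1) - 2*u i + u (i+1))^2 with hS2
  have hS0nn : 0 ≤ S0 := Finset.sum_nonneg fun i _ => sq_nonneg _
  have hS1nn : 0 ≤ S1 := Finset.sum_nonneg fun i _ => sq_nonneg _
  have hS2nn : 0 ≤ S2 := Finset.sum_nonneg fun i _ => sq_nonneg _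
  -- summation by parts
  have hsbp : ∑ i ∈ Icc 1 N, u i * (u (i-1) - 2*u i + u (i+1)) = -S1 := by
    have := sbp' u N
    rw [huM, hu0] at this
    linarith
  -- S2 ≤ 4 S1
  have hshift : ∑ i ∈ Icc 1 N, (u (i+1) - u (i+1-1))^2 = ∑ i ∈ Icc 2 (N+1), (u i - u (i-1))^2 := by
    rw [← Finset.map_add_right_Icc 1 N 1, Finset.sum_map]
    rfl
  have hS2le : S2 ≤ 4 * S1 := by
    have step1 : S2 ≤ ∑ i ∈ Icc 1 N, (2*(u (i+1) - u (i+1-1))^2 + 2*(u i - u (i-1))^2) := by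
      apply Finset.sum_le_sum
      intro i _
      simp only [Nat.add_sub_cancel]
      nlinarith [sq_nonneg (u (i+1) - u (i-1))]
    rw [Finset.sum_add_distrib, ← Finset.mul_sum, ← Finset.mul_sum, hshift] at step1
    have le1 : ∑ i ∈ Icc 2 (N+1), (u i - u (i-1))^2 ≤ S1 := by
      apply Finset.sum_le_sum_of_subset_of_nonneg
      · exact Finset.Icc_subset_Icc_left (by omega)
      · intro i _ _; exact sq_nonneg _
    have le2 : ∑ i ∈ Icc 1 N, (u i - u (i-1))^2 ≤ S1 := by
      apply Finset.sum_le_sum_of_subset_of_nonneg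
      · exact Finset.Icc_subset_Icc_right (by omega)
      · intro i _ _; exact sq_nonneg _
    linarith
  -- S1 ≤ 4 S0
  have hS1le : S1 ≤ 4 * S0 := by
    have step1 : S1 ≤ ∑ i ∈ Icc 1 (N+1), (2*(u i)^2 + 2*(u (i-1))^2) := by
      apply Finset.sum_le_sum
      intro i _
      nlinarith [sq_nonneg (u i + u (i-1))]
    rw [Finset.sum_add_distrib, ← Finset.mul_sum, ← Finset.mul_sum] at step1
    have e1 : ∑ i ∈ Icc 1 (N+1), (u i)^2 = S0 := by
      rw [Finset.sum_Icc_succ_top (by omega : 1 ≤ N+1), huM]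
      simp [hS0]
    have e2 : ∑ i ∈ Icc 1 (N+1), (u (i-1))^2 = S0 := by
      have : ∑ i ∈ Icc 1 (N+1), (u (i-1))^2 = ∑ i ∈ Icc 0 N, (u i)^2 := by
        rw [show Icc 1 (N+1) = Finset.map (addRightEmbedding 1) (Icc 0 N) by
          rw [Finset.map_add_right_Icc], Finset.sum_map]
        simp
      rw [this, ← Finset.sum_Ioc_add_eq_sum_Icc (by omega : 0 ≤ N), ← Finset.Icc_add_one_left_eq_Ioc, hu0]
      simp [hS0]
    rw [e1, e2] at step1
    linarith
  -- rewrite the two big sums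
  have eA : h * ∑ i ∈ Icc 1 N,
      ((u (i-1) + 10 * u i + u (i+1)) / 12) * (-((u (i-1) - 2 * u i + u (i+1)) / h^2))
      = (1/h) * (S1 - S2/12) := by
    have : ∀ i ∈ Icc 1 N, h * (((u (i-1) + 10 * u i + u (i+1)) / 12) *
        (-((u (i-1) - 2 * u i + u (i+1)) / h^2)))
        = (1/h) * (-(u i * (u (i-1) - 2*u i + u (i+1))) - (1/12) * (u (i-1) - 2*u i + u (i+1))^2) := by
      intro i _
      field_simp
      ring
    rw [Finset.mul_sum, Finset.sum_congr rfl this, ← Finset.mul_sum]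
    rw [Finset.sum_sub_distrib, Finset.sum_neg_distrib, hsbp, ← Finset.mul_sum, ← hS2]
    ring
  have eB : ∑ i ∈ Icc 1 N, ((u (i-1) + 10 * u i + u (i+1)) / 12)^2
      = S0 - S1/6 + S2/144 := by
    have : ∀ i ∈ Icc 1 N, ((u (i-1) + 10 * u i + u (i+1)) / 12)^2
        = (u i)^2 + (1/6) * (u i * (u (i-1) - 2*u i + u (i+1))) + (1/144) * (u (i-1) - 2*u i + u (i+1))^2 := by
      intro i _
      ring
    rw [Finset.sum_congr rfl this, Finset.sum_add_distrib, Finset.sum_add_distrib,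
        ← Finset.mul_sum, ← Finset.mul_sum, hsbp, ← hS0, ← hS2]
    ring
  rw [eA, eB]
  have hinv : 0 < 1/h := by positivity
  refine ⟨?_, ?_, ?_, ?_⟩
  · have : (2/3) * S1 ≤ S1 - S2/12 := by linarith
    calc (2/3) * ((1/h) * S1) = (1/h) * ((2/3) * S1) := by ring
    _ ≤ (1/h) * (S1 - S2/12) := by apply mul_le_mul_of_nonneg_left this (le_of_lt hinv)
  · have : S1 - S2/12 ≤ S1 := by linarith
    exact mul_le_mul_of_nonneg_left this (le_of_lt hinv)
  · have : (1/3) * S0 ≤ S0 - S1/6 + S2/144 := by linarith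
    calc (1/3) * (h * S0) = h * ((1/3) * S0) := by ring
    _ ≤ h * (S0 - S1/6 + S2/144) := by apply mul_le_mul_of_nonneg_left this (le_of_lt hh)
  · have : S0 - S1/6 + S2/144 ≤ S0 := by linarith
    exact mul_le_mul_of_nonneg_left this (le_of_lt hh)
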